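/- Let B₁ = {(0,0)} and W₁ = {(1,0),(0,1),(1,1)} in ℝ². Then for every v ∈ ℝ, (−h(B₁ ⊕ W̌₁, u_v))⁺ = (min(cos v, sin v))⁺, and ∫₀^{2π} (−h(B₁ ⊕ W̌₁, u_v))⁺ dv = 2 − √2. -/

import Mathlib

open Pointwise MeasureTheory

noncomputable section

/-- The plane `ℝ²`. -/
abbrev E2 := EuclideanSpace ℝ (Fin 2)

/-- The point `(x, y)` of `ℝ²`. -/
def pt (x y : ℝ) : E2 := (WithLp.equiv 2 (Fin 2 → ℝ)).symm ![x, y]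

/-- The support function `h(A, n) = sup_{y ∈ A} ⟨y, n⟩`. -/
def suppFn (A : Set E2) (n : E2) : ℝ := sSup ((fun y => (inner ℝ y n : ℝ)) '' A)

/-- The unit vector `u_v = (cos v, sin v)`. -/
def uv (v : ℝ) : E2 := pt (Real.cos v) (Real.sin v)

/-- Black pixels of the configuration `ξ₁` (class `η₂`). -/
def B1 : Set E2 := {pt 0 0}

/-- White pixels of the configuration `ξ₁`. -/
def W1 : Set E2 := {pt 1 0, pt 0 1, pt 1 1}


namespace Stmt9Aux

lemma pt_zero : pt 0 0 = 0 := by ext i; fin_cases i <;> simp [pt]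

lemma neg_pt (a b : ℝ) : -pt a b = pt (-a) (-b) := by
  ext i; fin_cases i <;> simp [pt]

lemma inner_pt (a b c d : ℝ) : (inner ℝ (pt a b) (pt c d) : ℝ) = a*c + b*d := by
  simp [pt, EuclideanSpace.inner_eq_star_dotProduct]
  ring

lemma key : B1 + -W1 = {pt (-1) 0, pt 0 (-1), pt (-1) (-1)} := by
  rw [B1, pt_zero, Set.singleton_add, W1]
  simp [neg_pt]

lemma sSup3 (a b c : ℝ) : sSup ({a, b, c} : Set ℝ) = a ⊔ (b ⊔ c) := by
  rw [csSup_insert (Set.Finite.bddAbove (by simp)) (by simp), csSup_pair]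

lemma suppFn_eval (v : ℝ) :
    suppFn (B1 + -W1) (uv v) = (-Real.cos v) ⊔ ((-Real.sin v) ⊔ (-Real.cos v - Real.sin v)) := by
  rw [suppFn, key, uv, Set.image_insert_eq, Set.image_insert_eq, Set.image_singleton,
    inner_pt, inner_pt, inner_pt, sSup3]
  ring_nf

lemma pointw (c s : ℝ) :
    max (-((-c) ⊔ ((-s) ⊔ (-c - s)))) 0 = max (min c s) 0 := by
  rcases le_total c s with h|h <;> rcases le_total c 0 with h1|h1 <;>
    rcases le_total s 0 with h2|h2 <;>
    simp [max_def, min_def] <;> split_ifs <;> linarith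

open Real in
lemma integral_part :
    ∫ v in (0:ℝ)..(2*π), max (min (Real.cos v) (Real.sin v)) 0 = 2 - Real.sqrt 2 := by
  have pi_pos := Real.pi_pos
  set f : ℝ → ℝ := fun v => max (min (Real.cos v) (Real.sin v)) 0 with hf
  have hcont : Continuous f := (continuous_cos.min continuous_sin).max continuous_const
  have h1 : ∫ v in (0:ℝ)..(π/4), f v = 1 - Real.sqrt 2 / 2 := by
    rw [intervalIntegral.integral_congr (g := Real.sin) ?_, integral_sin,
      Real.cos_pi_div_four, Real.cos_zero]
    intro v hv
    rw [Set.uIcc_of_le (by linarith)] at hv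
    have h0 : 0 ≤ Real.sin v :=
      Real.sin_nonneg_of_nonneg_of_le_pi hv.1 (by linarith [hv.2])
    have hsc : Real.sin v ≤ Real.cos v := by
      rw [← Real.sin_pi_div_two_sub]
      exact Real.strictMonoOn_sin.monotoneOn
        ⟨by linarith [hv.1], by linarith [hv.2]⟩
        ⟨by linarith [hv.2], by linarith [hv.1]⟩ (by linarith [hv.2])
    simp [hf, min_eq_right hsc, max_eq_left h0]
  have h2 : ∫ v in (π/4:ℝ)..(π/2), f v = 1 - Real.sqrt 2 / 2 := by
    rw [intervalIntegral.integral_congr (g := Real.cos) ?_, integral_cos,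
      Real.sin_pi_div_four, Real.sin_pi_div_two]
    intro v hv
    rw [Set.uIcc_of_le (by linarith)] at hv
    have h0 : 0 ≤ Real.cos v :=
      Real.cos_nonneg_of_mem_Icc ⟨by linarith [hv.1], hv.2⟩
    have hcs : Real.cos v ≤ Real.sin v := by
      rw [← Real.cos_pi_div_two_sub]
      exact Real.strictAntiOn_cos.antitoneOn
        ⟨by linarith [hv.2], by linarith [hv.1, hv.2]⟩
        ⟨by linarith [hv.1], by linarith [hv.1, hv.2]⟩ (by linarith [hv.1])
    simp [hf, min_eq_left hcs, max_eq_left h0]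
  have h3 : ∫ v in (π/2:ℝ)..(2*π), f v = 0 := by
    rw [intervalIntegral.integral_congr (g := fun _ => (0:ℝ)) ?_]
    · simp
    intro v hv
    rw [Set.uIcc_of_le (by linarith)] at hv
    have hmin : min (Real.cos v) (Real.sin v) ≤ 0 := by
      rcases le_total v π with h|h
      · exact le_trans (min_le_left _ _)
          (Real.cos_nonpos_of_pi_div_two_le_of_le hv.1 (by linarith))
      · refine le_trans (min_le_right _ _) ?_
        have : Real.sin (v - π) = -Real.sin v := Real.sin_sub_pi v
        have h0 : 0 ≤ Real.sin (v - π) :=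
          Real.sin_nonneg_of_nonneg_of_le_pi (by linarith) (by linarith [hv.2])
        linarith
    simp [hf, max_eq_right hmin]
  have hsplit1 := intervalIntegral.integral_add_adjacent_intervals
    (μ := volume) (a := (0:ℝ)) (b := π/4) (c := π/2)
    (hcont.intervalIntegrable _ _) (hcont.intervalIntegrable _ _)
  have hsplit2 := intervalIntegral.integral_add_adjacent_intervals
    (μ := volume) (a := (0:ℝ)) (b := π/2) (c := 2*π)
    (hcont.intervalIntegrable _ _) (hcont.intervalIntegrable _ _)
  have hs2 : Real.sqrt 2 / 2 + Real.sqrt 2 / 2 = Real.sqrt 2 := by ring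
  calc ∫ v in (0:ℝ)..(2*π), f v
      = (∫ v in (0:ℝ)..(π/4), f v) + (∫ v in (π/4:ℝ)..(π/2), f v)
          + ∫ v in (π/2:ℝ)..(2*π), f v := by rw [hsplit1, hsplit2]
    _ = 2 - Real.sqrt 2 := by rw [h1, h2, h3]; ring

end Stmt9Aux

/-- From the proof of Theorem 3: `(−h(B₁ ⊕ W̌₁, u_v))⁺ = (min(cos v, sin v))⁺` for all `v`,
and its integral over `[0, 2π]` equals `2 − √2`. -/
theorem stmt_9 :
    (∀ v : ℝ, max (-(suppFn (B1 + -W1) (uv v))) 0 = max (min (Real.cos v) (Real.sin v)) 0) ∧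
      ∫ v in (0 : ℝ)..(2 * Real.pi), max (-(suppFn (B1 + -W1) (uv v))) 0 =
        2 - Real.sqrt 2 := by
  have hpt : ∀ v : ℝ, max (-(suppFn (B1 + -W1) (uv v))) 0
      = max (min (Real.cos v) (Real.sin v)) 0 := by
    intro v
    rw [Stmt9Aux.suppFn_eval, Stmt9Aux.pointw]
  refine ⟨hpt, ?_⟩
  rw [intervalIntegral.integral_congr (g := fun v => max (min (Real.cos v) (Real.sin v)) 0)
    (fun v _ => hpt v)]
  exact Stmt9Aux.integral_part

end
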